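/- For a separable state ρ = Σ_k p_k ρ_k^A ⊗ ρ_k^B on ℂ^d ⊗ ℂ^d written in Schmidt operator form ρ = Σ_k λ̃_k Ã_k ⊗ B̃_k with orthonormal Hermitian operator bases {Ã_k}, {B̃_k} and λ̃_k ≥ 0, the CCNR value CCNR(ρ) = Σ_k λ̃_k satisfies CCNR(ρ) ≤ 1. -/

import Mathlib

open Matrix Kronecker ComplexOrder

section Aux

variable {n : Type} [Fintype n] [DecidableEq n]

lemma herm_trace_real {X Y : Matrix n n ℂ} (hX : X.IsHermitian) (hY : Y.IsHermitian) :
    ((X * Y).trace.re : ℂ) = (X * Y).trace := by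
  have h : (starRingEnd ℂ) ((X * Y).trace) = (X * Y).trace := by
    have : ((X * Y)ᴴ).trace = star ((X * Y).trace) := Matrix.trace_conjTranspose _
    rw [conjTranspose_mul, hX.eq, hY.eq, trace_mul_comm] at this
    exact this.symm
  exact ((Complex.conj_eq_iff_re).mp h)

lemma trace_sq_re_nonneg {M : Matrix n n ℂ} (hM : M.IsHermitian) :
    0 ≤ ((M * M).trace).re := by
  have : M * M = M * Mᴴ := by rw [hM.eq]
  rw [this]
  simp only [Matrix.trace, Matrix.diag, Matrix.mul_apply, Matrix.conjTranspose_apply]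
  rw [Complex.re_sum]
  apply Finset.sum_nonneg
  intro i _
  rw [Complex.re_sum]
  apply Finset.sum_nonneg
  intro j _
  rw [Complex.star_def, Complex.mul_conj, Complex.ofReal_re]
  exact Complex.normSq_nonneg _

lemma bessel {K : Type} [Fintype K] [DecidableEq K] (A : K → Matrix n n ℂ)
    (hH : ∀ k, (A k).IsHermitian)
    (hOn : ∀ k l, (A k * A l).trace = if k = l then 1 else 0)
    (X : Matrix n n ℂ) (hX : X.IsHermitian) :
    ∑ k, ((X * A k).trace.re)^2 ≤ ((X * X).trace).re := by
  set c : K → ℝ := fun k => (X * A k).trace.re with hc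
  have hck : ∀ k, (X * A k).trace = (c k : ℂ) := fun k =>
    (herm_trace_real hX (hH k)).symm
  set M : Matrix n n ℂ := X - ∑ k, (c k : ℂ) • A k with hMdef
  have hM : M.IsHermitian := by
    have hs : (∑ k, (c k : ℂ) • A k).IsHermitian := by
      show _ᴴ = _
      rw [Matrix.conjTranspose_sum]
      exact Finset.sum_congr rfl fun k _ => by
        rw [Matrix.conjTranspose_smul, (hH k).eq, Complex.star_def, Complex.conj_ofReal]
    exact hX.sub hs
  have expand : (M * M).trace = (X * X).trace - (∑ k, ((c k : ℂ))^2) := by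
    unfold M
    simp only [sub_mul, mul_sub, Finset.sum_mul, Finset.mul_sum, smul_mul_assoc,
      mul_smul_comm, trace_sub, trace_sum, trace_smul, hck, hOn, smul_ite, smul_eq_mul]
    have e1 : ∀ x : K, ((c x : ℂ)) * (A x * X).trace = (c x : ℂ)^2 := fun x => by
      rw [trace_mul_comm, hck x]; ring
    have e2 : ∀ x : K, ((c x : ℂ)) * (c x : ℂ)
        - ∑ i, (c x : ℂ) * ((c i : ℂ) * if i = x then 1 else 0) = 0 := fun x => by
      simp [mul_ite, mul_one, mul_zero, Finset.sum_ite_eq]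
    simp only [e1, e2, Finset.sum_const_zero, sub_zero]
  have h0 : 0 ≤ ((M * M).trace).re := trace_sq_re_nonneg hM
  rw [expand] at h0
  have : ((∑ k, ((c k : ℂ))^2)) = ((∑ k, (c k)^2 : ℝ) : ℂ) := by push_cast; ring
  rw [this] at h0
  simp only [Complex.sub_re, Complex.ofReal_re] at h0
  linarith

lemma purity {X : Matrix n n ℂ} (hX : X.PosSemidef) (ht : X.trace = 1) :
    ((X * X).trace).re ≤ 1 := by
  have hH := hX.1
  have hspec := hH.spectral_theorem
  rw [Unitary.conjStarAlgAut_apply] at hspec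
  set U : Matrix n n ℂ := (hH.eigenvectorUnitary : Matrix n n ℂ) with hU
  set D : Matrix n n ℂ := diagonal (RCLike.ofReal ∘ hH.eigenvalues) with hD
  have hUU : star U * U = 1 := (Matrix.mem_unitaryGroup_iff').mp hH.eigenvectorUnitary.2
  have hUU2 : ∀ (Y : Matrix n n ℂ), star U * (U * Y) = Y := fun Y => by
    rw [← mul_assoc, hUU, one_mul]
  have htrX : X.trace = D.trace := by
    conv_lhs => rw [hspec]
    rw [trace_mul_cycle]
    rw [hUU, one_mul]
  have htrX2 : (X * X).trace = (D * D).trace := by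
    have hX2 : X * X = U * (D * (D * star U)) := by
      rw [hspec]
      simp only [mul_assoc]
      rw [hUU2]
    rw [hX2, trace_mul_comm]
    simp only [mul_assoc]
    rw [hUU, mul_one]
  have hDtr : D.trace = ((∑ i, hH.eigenvalues i : ℝ) : ℂ) := by
    simp [hD, trace_diagonal]
  have hsum1 : ∑ i, hH.eigenvalues i = 1 := by
    rw [htrX, hDtr] at ht
    exact_mod_cast ht
  have hD2 : (D * D).trace = ((∑ i, (hH.eigenvalues i)^2 : ℝ) : ℂ) := by
    simp [hD, diagonal_mul_diagonal, trace_diagonal, sq]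
  rw [htrX2, hD2]
  simp only [Complex.ofReal_re]
  calc ∑ i, (hH.eigenvalues i)^2 ≤ (∑ i, hH.eigenvalues i)^2 :=
        Finset.sum_sq_le_sq_sum_of_nonneg (fun i _ => hX.eigenvalues_nonneg i)
    _ = 1 := by rw [hsum1]; norm_num

end Aux

theorem ccnr_criterion_separable (d : ℕ) (ι : Type) [Fintype ι]
    (p : ι → ℝ) (hp : ∀ i, 0 ≤ p i) (hps : ∑ i, p i = 1)
    (ρA ρB : ι → Matrix (Fin d) (Fin d) ℂ)
    (hρA : ∀ i, (ρA i).PosSemidef ∧ (ρA i).trace = 1)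
    (hρB : ∀ i, (ρB i).PosSemidef ∧ (ρB i).trace = 1)
    (ρ : Matrix (Fin d × Fin d) (Fin d × Fin d) ℂ)
    (hρ : ρ = ∑ i, (p i : ℂ) • (ρA i ⊗ₖ ρB i))
    (At Bt : Fin (d^2) → Matrix (Fin d) (Fin d) ℂ)
    (hAtHerm : ∀ k, (At k).IsHermitian) (hBtHerm : ∀ k, (Bt k).IsHermitian)
    (hAtOn : ∀ k l, (At k * At l).trace = if k = l then 1 else 0)
    (hBtOn : ∀ k l, (Bt k * Bt l).trace = if k = l then 1 else 0)
    (lam : Fin (d^2) → ℝ) (hlam : ∀ k, 0 ≤ lam k)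
    (hSchmidt : ρ = ∑ k, (lam k : ℂ) • (At k ⊗ₖ Bt k)) :
    ∑ k, lam k ≤ 1 := by
  set a : ι → Fin (d^2) → ℝ := fun i k => ((ρA i * At k).trace).re with ha
  set b : ι → Fin (d^2) → ℝ := fun i k => ((ρB i * Bt k).trace).re with hb
  -- trace pairing computed two ways
  have key : ∀ k, (lam k : ℂ) = ∑ i, (p i : ℂ) * (a i k) * (b i k) := by
    intro k
    have h1 : (ρ * (At k ⊗ₖ Bt k)).trace = (lam k : ℂ) := by
      rw [hSchmidt, Finset.sum_mul, trace_sum]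
      rw [Finset.sum_congr rfl (fun l _ => by
        rw [smul_mul_assoc, trace_smul, ← mul_kronecker_mul, trace_kronecker, hAtOn, hBtOn])]
      simp [Finset.sum_ite_eq']
    have h2 : (ρ * (At k ⊗ₖ Bt k)).trace
        = ∑ i, (p i : ℂ) * (a i k) * (b i k) := by
      rw [hρ, Finset.sum_mul, trace_sum]
      apply Finset.sum_congr rfl
      intro i _
      rw [smul_mul_assoc, trace_smul, ← mul_kronecker_mul, trace_kronecker,
        ← herm_trace_real (hρA i).1.1 (hAtHerm k), ← herm_trace_real (hρB i).1.1 (hBtHerm k)]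
      simp [smul_eq_mul, mul_assoc, ha, hb]
    rw [← h1, h2]
  have keyR : ∀ k, lam k = ∑ i, p i * (a i k) * (b i k) := by
    intro k
    have := key k
    have : ((lam k : ℝ) : ℂ) = ((∑ i, p i * a i k * b i k : ℝ) : ℂ) := by
      rw [this]; push_cast; ring_nf
    exact_mod_cast this
  -- per-i bounds
  have hA2 : ∀ i, ∑ k, (a i k)^2 ≤ 1 := by
    intro i
    calc ∑ k, (a i k)^2 ≤ ((ρA i * ρA i).trace).re :=
          bessel At hAtHerm hAtOn (ρA i) (hρA i).1.1
      _ ≤ 1 := purity (hρA i).1 (hρA i).2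
  have hB2 : ∀ i, ∑ k, (b i k)^2 ≤ 1 := by
    intro i
    calc ∑ k, (b i k)^2 ≤ ((ρB i * ρB i).trace).re :=
          bessel Bt hBtHerm hBtOn (ρB i) (hρB i).1.1
      _ ≤ 1 := purity (hρB i).1 (hρB i).2
  have hCS : ∀ i, ∑ k, (a i k) * (b i k) ≤ 1 := by
    intro i
    have h2 : (∑ k, a i k * b i k)^2 ≤ (∑ k, (a i k)^2) * (∑ k, (b i k)^2) :=
      Finset.sum_mul_sq_le_sq_mul_sq Finset.univ (a i) (b i)
    nlinarith [hA2 i, hB2 i, sq_nonneg (∑ k, a i k * b i k),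
      Finset.sum_nonneg (fun k (_ : k ∈ Finset.univ) => sq_nonneg (a i k)),
      Finset.sum_nonneg (fun k (_ : k ∈ Finset.univ) => sq_nonneg (b i k))]
  calc ∑ k, lam k = ∑ i, p i * (∑ k, a i k * b i k) := by
        simp only [keyR, Finset.mul_sum]
        rw [Finset.sum_comm]
        exact Finset.sum_congr rfl fun i _ =>
          Finset.sum_congr rfl fun k _ => by ring
    _ ≤ ∑ i, p i * 1 := Finset.sum_le_sum fun i _ =>
        mul_le_mul_of_nonneg_left (hCS i) (hp i)
    _ = 1 := by simp [hps]
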